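/- arXiv:1304.7954 — 2 statements merged into one kernel-verified Lean document; each statement's English description precedes it below -/
import Mathlib

section
/- Assume R₃ > 1 and let X₃ = (0, 0, 1 − 1/R₃, 0, 0, (R₃−1)δ₃/α₃). Then all six eigenvalues of J(X₃) are negative real numbers if and only if R₃ > R₁ and R₃ > R₂. Moreover, if R₁ > R₃ or R₂ > R₃, then J(X₃) has a positive real eigenvalue. -/
open Polynomial Matrix

set_option maxRecDepth 8000
set_option maxHeartbeats 2000000

@[simp] private lemma cons_val_five' {α : Type*} {m : ℕ} (x : α) (u : Fin (m+5) → α) :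
    Matrix.vecCons x u 5 =
      Matrix.vecHead (Matrix.vecTail (Matrix.vecTail (Matrix.vecTail (Matrix.vecTail u)))) :=
  rfl

private lemma det6 (x δ₁ δ₂ δ₃ c p₁ p₂ q₂ q₃ r₃ A B G w : ℝ) :
    (!![x+δ₁, 0, 0, -A, 0, 0;
       0, x+δ₂, 0, 0, -B, 0;
       w, w, x+w+δ₃, 0, 0, -G;
       -p₁, 0, 0, x+c, 0, 0;
       -p₂, -q₂, 0, 0, x+c, 0;
       0, -q₃, -r₃, 0, 0, x+c] : Matrix (Fin 6) (Fin 6) ℝ).det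
    = (x^2 + (δ₁+c)*x + (c*δ₁ - A*p₁)) * (x^2 + (δ₂+c)*x + (c*δ₂ - B*q₂))
      * (x^2 + (w+δ₃+c)*x + (c*(w+δ₃) - G*r₃)) := by
  simp (config := {decide := true}) [det_succ_row_zero, Fin.sum_univ_succ, Fin.succAbove]
  ring

private lemma charmap6 (δ₁ δ₂ δ₃ c p₁ p₂ q₂ q₃ r₃ A B G w x : ℝ) :
    (charmatrix (!![-δ₁, 0, 0, A, 0, 0;
       0, -δ₂, 0, 0, B, 0;
       -w, -w, -(w+δ₃), 0, 0, G;
       p₁, 0, 0, -c, 0, 0;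
       p₂, q₂, 0, 0, -c, 0;
       0, q₃, r₃, 0, 0, -c] : Matrix (Fin 6) (Fin 6) ℝ)).map (evalRingHom x)
    = !![x+δ₁, 0, 0, -A, 0, 0;
       0, x+δ₂, 0, 0, -B, 0;
       w, w, x+w+δ₃, 0, 0, -G;
       -p₁, 0, 0, x+c, 0, 0;
       -p₂, -q₂, 0, 0, x+c, 0;
       0, -q₃, -r₃, 0, 0, x+c] := by
  ext i j
  fin_cases i <;> fin_cases j <;>
    simp [charmatrix_apply, Matrix.diagonal, Matrix.map_apply, Matrix.vecHead,
      Matrix.vecTail] <;> ring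

private lemma eval_charpoly {n : ℕ} (M : Matrix (Fin n) (Fin n) ℝ) (x : ℝ) :
    eval x M.charpoly = ((charmatrix M).map (evalRingHom x)).det := by
  rw [Matrix.charpoly, ← coe_evalRingHom]
  exact RingHom.map_det (evalRingHom x) _

private lemma charpoly6 (δ₁ δ₂ δ₃ c p₁ p₂ q₂ q₃ r₃ A B G w : ℝ) :
    (!![-δ₁, 0, 0, A, 0, 0;
       0, -δ₂, 0, 0, B, 0;
       -w, -w, -(w+δ₃), 0, 0, G;
       p₁, 0, 0, -c, 0, 0;
       p₂, q₂, 0, 0, -c, 0;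
       0, q₃, r₃, 0, 0, -c] : Matrix (Fin 6) (Fin 6) ℝ).charpoly
    = (X^2 + C (δ₁+c) * X + C (c*δ₁ - A*p₁)) * (X^2 + C (δ₂+c) * X + C (c*δ₂ - B*q₂))
      * (X^2 + C (w+δ₃+c) * X + C (c*(w+δ₃) - G*r₃)) := by
  apply Polynomial.funext
  intro x
  rw [eval_charpoly, charmap6, det6]
  simp only [eval_mul, eval_add, eval_pow, eval_C, eval_X]

private lemma quadFactor (a b s : ℝ) (hs : s^2 = a^2 - 4*b) :
    (X^2 + C a * X + C b : ℝ[X]) = (X - C ((-a+s)/2)) * (X - C ((-a-s)/2)) := by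
  have h1 : C ((-a+s)/2) + C ((-a-s)/2) = C (-a) := by rw [← C_add]; congr 1; ring
  have h2 : C ((-a+s)/2) * C ((-a-s)/2) = C b := by rw [← C_mul]; congr 1; nlinarith [hs]
  have h3 : (X - C ((-a+s)/2)) * (X - C ((-a-s)/2))
      = X^2 - (C ((-a+s)/2) + C ((-a-s)/2))*X + C ((-a+s)/2)*C ((-a-s)/2) := by ring
  rw [h3, h1, h2, map_neg]
  ring

private lemma root_neg_iff (a b s : ℝ) (ha : 0 < a) (hs0 : 0 ≤ s) (hs : s^2 = a^2 - 4*b) :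
    (-a+s)/2 < 0 ↔ 0 < b := by
  constructor
  · intro h
    have hsa : s < a := by linarith
    nlinarith
  · intro hb
    have h2 : s^2 < a^2 := by nlinarith
    have : s < a := by nlinarith
    linarith

private lemma root_pos (a b s : ℝ) (ha : 0 < a) (hs0 : 0 ≤ s) (hs : s^2 = a^2 - 4*b)
    (hb : b < 0) : 0 < (-a+s)/2 := by
  have h2 : a^2 < s^2 := by nlinarith
  have : a < s := by nlinarith
  linarith

private lemma root_neg' (a s : ℝ) (ha : 0 < a) (hs0 : 0 ≤ s) : (-a-s)/2 < 0 := by linarith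

private lemma bpos_iff (α p c δ R : ℝ) (hR : 0 < R) (hcd : 0 < c*δ) :
    (0 < c*δ - (α/R)*p ↔ α*p/(c*δ) < R) := by
  rw [sub_pos, div_mul_eq_mul_div, div_lt_iff₀ hR, div_lt_iff₀ hcd]
  constructor <;> intro <;> nlinarith

private lemma bneg (α p c δ R : ℝ) (hR : 0 < R) (hcd : 0 < c*δ) (h : R < α*p/(c*δ)) :
    c*δ - (α/R)*p < 0 := by
  rw [lt_div_iff₀ hcd] at h
  rw [sub_neg, div_mul_eq_mul_div, lt_div_iff₀ hR]
  nlinarith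

private lemma discrim_nonneg' (d c t : ℝ) (ht : 0 ≤ t) : 0 ≤ (d+c)^2 - 4*(c*d - t) := by
  nlinarith [sq_nonneg (d-c)]

private lemma discrim_nonneg₃ (w δ c : ℝ) (hδ : 0 ≤ δ) (hc : 0 ≤ c) :
    0 ≤ (w+δ+c)^2 - 4*(c*w) := by
  nlinarith [sq_nonneg (w+δ-c), mul_nonneg hc hδ]

/-- Jacobian matrix of the HBV three-strain vector field at `x = (y₁,y₂,y₃,v₁,v₂,v₃)`. -/
noncomputable def Jhbv (α₁ α₂ α₃ δ₁ δ₂ δ₃ c p₁ p₂ q₂ q₃ r₃ : ℝ) (x : Fin 6 → ℝ) :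
    Matrix (Fin 6) (Fin 6) ℝ :=
  !![-(α₁ * x 3 + δ₁), -(α₁ * x 3), -(α₁ * x 3), α₁ * (1 - x 0 - x 1 - x 2), 0, 0;
     -(α₂ * x 4), -(α₂ * x 4 + δ₂), -(α₂ * x 4), 0, α₂ * (1 - x 0 - x 1 - x 2), 0;
     -(α₃ * x 5), -(α₃ * x 5), -(α₃ * x 5 + δ₃), 0, 0, α₃ * (1 - x 0 - x 1 - x 2);
     p₁, 0, 0, -c, 0, 0;
     p₂, q₂, 0, 0, -c, 0;
     0, q₃, r₃, 0, 0, -c]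

/-- assuming R₃ > 1, all six eigenvalues of J(X₃) are negative real numbers
iff R₃ > R₁ and R₃ > R₂; moreover if R₁ > R₃ or R₂ > R₃ then J(X₃) has a positive real
eigenvalue. -/
theorem stmt_5 (α₁ α₂ α₃ δ₁ δ₂ δ₃ c p₁ p₂ q₂ q₃ r₃ : ℝ)
    (hα₁ : 0 < α₁) (hα₂ : 0 < α₂) (hα₃ : 0 < α₃)
    (hδ₁ : 0 < δ₁) (hδ₂ : 0 < δ₂) (hδ₃ : 0 < δ₃) (hc : 0 < c)
    (hp₁ : 0 < p₁) (hp₂ : 0 < p₂) (hq₂ : 0 < q₂) (hq₃ : 0 < q₃) (hr₃ : 0 < r₃)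
    (hR₃ : 1 < α₃ * r₃ / (c * δ₃)) :
    let R₁ : ℝ := α₁ * p₁ / (c * δ₁)
    let R₂ : ℝ := α₂ * q₂ / (c * δ₂)
    let R₃ : ℝ := α₃ * r₃ / (c * δ₃)
    let M := Jhbv α₁ α₂ α₃ δ₁ δ₂ δ₃ c p₁ p₂ q₂ q₃ r₃
      ![0, 0, 1 - 1 / R₃, 0, 0, (R₃ - 1) * δ₃ / α₃]
    ((∀ μ ∈ (M.charpoly.map (algebraMap ℝ ℂ)).roots, μ.re < 0 ∧ μ.im = 0) ↔
        R₁ < R₃ ∧ R₂ < R₃) ∧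
      ((R₃ < R₁ ∨ R₃ < R₂) → ∃ μ : ℝ, M.charpoly.IsRoot μ ∧ 0 < μ) := by
  intro R₁ R₂ R₃ M
  have hR₃' : (1:ℝ) < R₃ := hR₃
  have hR₃pos : (0:ℝ) < R₃ := by linarith
  have hcd₁ : (0:ℝ) < c * δ₁ := by positivity
  have hcd₂ : (0:ℝ) < c * δ₂ := by positivity
  set w : ℝ := (R₃ - 1) * δ₃ with hwdef
  have hwpos : 0 < w := by rw [hwdef]; exact mul_pos (sub_pos.2 hR₃') hδ₃
  set A : ℝ := α₁ / R₃ with hAdef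
  set B : ℝ := α₂ / R₃ with hBdef
  set G : ℝ := α₃ / R₃ with hGdef
  have hApos : 0 < A := div_pos hα₁ hR₃pos
  have hBpos : 0 < B := div_pos hα₂ hR₃pos
  have hGpos : 0 < G := div_pos hα₃ hR₃pos
  have hM : M = !![-δ₁, 0, 0, A, 0, 0;
       0, -δ₂, 0, 0, B, 0;
       -w, -w, -(w+δ₃), 0, 0, G;
       p₁, 0, 0, -c, 0, 0;
       p₂, q₂, 0, 0, -c, 0;
       0, q₃, r₃, 0, 0, -c] := by
    show Jhbv α₁ α₂ α₃ δ₁ δ₂ δ₃ c p₁ p₂ q₂ q₃ r₃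
      ![0, 0, 1 - 1 / R₃, 0, 0, (R₃ - 1) * δ₃ / α₃] = _
    ext i j
    fin_cases i <;> fin_cases j <;>
      (simp [Jhbv, Matrix.vecHead, Matrix.vecTail, hwdef, hAdef, hBdef, hGdef] <;>
        field_simp <;> ring)
  have hGr : G * r₃ = c * δ₃ := by
    rw [hGdef, div_mul_eq_mul_div, div_eq_iff hR₃pos.ne']
    show α₃ * r₃ = c * δ₃ * (α₃ * r₃ / (c * δ₃))
    field_simp
  set a₁ : ℝ := δ₁ + c with ha₁
  set b₁ : ℝ := c*δ₁ - A*p₁ with hb₁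
  set a₂ : ℝ := δ₂ + c with ha₂
  set b₂ : ℝ := c*δ₂ - B*q₂ with hb₂
  set a₃ : ℝ := w + δ₃ + c with ha₃
  set b₃ : ℝ := c*(w+δ₃) - G*r₃ with hb₃
  have hb₃' : b₃ = c * w := by rw [hb₃, hGr]; ring
  have hb₃pos : 0 < b₃ := by rw [hb₃']; positivity
  have ha₁pos : 0 < a₁ := by rw [ha₁]; positivity
  have ha₂pos : 0 < a₂ := by rw [ha₂]; positivity
  have ha₃pos : 0 < a₃ := by rw [ha₃]; positivity
  have hD₁ : 0 ≤ a₁^2 - 4*b₁ := by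
    rw [ha₁, hb₁]; exact discrim_nonneg' δ₁ c (A*p₁) (mul_pos hApos hp₁).le
  have hD₂ : 0 ≤ a₂^2 - 4*b₂ := by
    rw [ha₂, hb₂]; exact discrim_nonneg' δ₂ c (B*q₂) (mul_pos hBpos hq₂).le
  have hD₃ : 0 ≤ a₃^2 - 4*b₃ := by
    rw [ha₃, hb₃']; exact discrim_nonneg₃ w δ₃ c hδ₃.le hc.le
  set s₁ : ℝ := Real.sqrt (a₁^2 - 4*b₁) with hs₁def
  set s₂ : ℝ := Real.sqrt (a₂^2 - 4*b₂) with hs₂def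
  set s₃ : ℝ := Real.sqrt (a₃^2 - 4*b₃) with hs₃def
  have hs₁ : s₁^2 = a₁^2 - 4*b₁ := Real.sq_sqrt hD₁
  have hs₂ : s₂^2 = a₂^2 - 4*b₂ := Real.sq_sqrt hD₂
  have hs₃ : s₃^2 = a₃^2 - 4*b₃ := Real.sq_sqrt hD₃
  have hs₁0 : 0 ≤ s₁ := Real.sqrt_nonneg _
  have hs₂0 : 0 ≤ s₂ := Real.sqrt_nonneg _
  have hs₃0 : 0 ≤ s₃ := Real.sqrt_nonneg _
  set u₁ : ℝ := (-a₁+s₁)/2 with hu₁def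
  set v₁ : ℝ := (-a₁-s₁)/2 with hv₁def
  set u₂ : ℝ := (-a₂+s₂)/2 with hu₂def
  set v₂ : ℝ := (-a₂-s₂)/2 with hv₂def
  set u₃ : ℝ := (-a₃+s₃)/2 with hu₃def
  set v₃ : ℝ := (-a₃-s₃)/2 with hv₃def
  have hcp : M.charpoly = (X - C u₁) * (X - C v₁) * ((X - C u₂) * (X - C v₂))
      * ((X - C u₃) * (X - C v₃)) := by
    rw [hM, charpoly6, ← ha₁, ← hb₁, ← ha₂, ← hb₂, ← ha₃, ← hb₃,
      quadFactor a₁ b₁ s₁ hs₁, quadFactor a₂ b₂ s₂ hs₂, quadFactor a₃ b₃ s₃ hs₃,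
      ← hu₁def, ← hv₁def, ← hu₂def, ← hv₂def, ← hu₃def, ← hv₃def]
  have hroots : (M.charpoly.map (algebraMap ℝ ℂ)).roots
      = {(u₁:ℂ), (v₁:ℂ), (u₂:ℂ), (v₂:ℂ), (u₃:ℂ), (v₃:ℂ)} := by
    have h : M.charpoly.map (algebraMap ℝ ℂ)
        = (Multiset.map (fun (z:ℂ) => X - C z)
            ({(u₁:ℂ), (v₁:ℂ), (u₂:ℂ), (v₂:ℂ), (u₃:ℂ), (v₃:ℂ)} : Multiset ℂ)).prod := by
      rw [hcp]
      simp only [Polynomial.map_mul, Polynomial.map_sub, Polynomial.map_X, Polynomial.map_C,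
        Multiset.insert_eq_cons, Multiset.map_cons, Multiset.map_singleton,
        Multiset.prod_cons, Multiset.prod_singleton, Complex.coe_algebraMap]
      ring
    rw [h, Polynomial.roots_multiset_prod_X_sub_C]
  have hmem : ∀ μ : ℂ, μ ∈ (M.charpoly.map (algebraMap ℝ ℂ)).roots ↔
      (μ = (u₁:ℂ) ∨ μ = (v₁:ℂ) ∨ μ = (u₂:ℂ) ∨ μ = (v₂:ℂ) ∨ μ = (u₃:ℂ) ∨ μ = (v₃:ℂ)) := by
    intro μ; rw [hroots]; simp
  have hb₁R : 0 < b₁ ↔ R₁ < R₃ := by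
    rw [hb₁, hAdef]; exact bpos_iff α₁ p₁ c δ₁ R₃ hR₃pos hcd₁
  have hb₂R : 0 < b₂ ↔ R₂ < R₃ := by
    rw [hb₂, hBdef]; exact bpos_iff α₂ q₂ c δ₂ R₃ hR₃pos hcd₂
  have hb₁R' : R₃ < R₁ → b₁ < 0 := fun h => by
    rw [hb₁, hAdef]; exact bneg α₁ p₁ c δ₁ R₃ hR₃pos hcd₁ h
  have hb₂R' : R₃ < R₂ → b₂ < 0 := fun h => by
    rw [hb₂, hBdef]; exact bneg α₂ q₂ c δ₂ R₃ hR₃pos hcd₂ h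
  have hv₁neg : v₁ < 0 := by rw [hv₁def]; exact root_neg' a₁ s₁ ha₁pos hs₁0
  have hv₂neg : v₂ < 0 := by rw [hv₂def]; exact root_neg' a₂ s₂ ha₂pos hs₂0
  have hv₃neg : v₃ < 0 := by rw [hv₃def]; exact root_neg' a₃ s₃ ha₃pos hs₃0
  have hu₁iff : u₁ < 0 ↔ 0 < b₁ := by
    rw [hu₁def]; exact root_neg_iff a₁ b₁ s₁ ha₁pos hs₁0 hs₁
  have hu₂iff : u₂ < 0 ↔ 0 < b₂ := by
    rw [hu₂def]; exact root_neg_iff a₂ b₂ s₂ ha₂pos hs₂0 hs₂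
  have hu₃neg : u₃ < 0 := by
    rw [hu₃def]; exact (root_neg_iff a₃ b₃ s₃ ha₃pos hs₃0 hs₃).2 hb₃pos
  constructor
  · constructor
    · intro H
      have h1 : u₁ < 0 := by
        have := (H (u₁:ℂ) ((hmem _).2 (Or.inl rfl))).1
        simpa using this
      have h2 : u₂ < 0 := by
        have := (H (u₂:ℂ) ((hmem _).2 (Or.inr (Or.inr (Or.inl rfl))))).1
        simpa using this
      exact ⟨hb₁R.1 (hu₁iff.1 h1), hb₂R.1 (hu₂iff.1 h2)⟩
    · rintro ⟨h1, h2⟩ μ hμ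
      have hu₁neg : u₁ < 0 := hu₁iff.2 (hb₁R.2 h1)
      have hu₂neg : u₂ < 0 := hu₂iff.2 (hb₂R.2 h2)
      rcases (hmem μ).1 hμ with rfl | rfl | rfl | rfl | rfl | rfl
      · exact ⟨by simpa using hu₁neg, by simp⟩
      · exact ⟨by simpa using hv₁neg, by simp⟩
      · exact ⟨by simpa using hu₂neg, by simp⟩
      · exact ⟨by simpa using hv₂neg, by simp⟩
      · exact ⟨by simpa using hu₃neg, by simp⟩
      · exact ⟨by simpa using hv₃neg, by simp⟩
  · rintro (h | h)
    · refine ⟨u₁, ?_, ?_⟩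
      · rw [Polynomial.IsRoot, hcp]; simp
      · rw [hu₁def]; exact root_pos a₁ b₁ s₁ ha₁pos hs₁0 hs₁ (hb₁R' h)
    · refine ⟨u₂, ?_, ?_⟩
      · rw [Polynomial.IsRoot, hcp]; simp
      · rw [hu₂def]; exact root_pos a₂ b₂ s₂ ha₂pos hs₂0 hs₂ (hb₂R' h)
end

section
/- Set the mutation parameters p₂ = 0 and q₃ = 0 in the Jacobian matrix J, assume R₁ > 1, and let X₁ = (1 − 1/R₁, 0, 0, δ₁(R₁−1)/α₁, 0, 0). Then the six eigenvalues of J(X₁) are the real numbers (−α₁v̂₁ − δ₁ − c ± √((α₁v̂₁ + δ₁ − c)² + 4α₁p₁/R₁))/2 where v̂₁ = δ₁(R₁−1)/α₁, (−c − δ₂ ± √((δ₂−c)² + 4α₂q₂/R₁))/2, and (−c − δ₃ ± √((δ₃−c)² + 4α₃r₃/R₁))/2; and all six of them are negative if and only if R₁ > R₂ and R₁ > R₃. -/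
open Polynomial Matrix

set_option maxRecDepth 8000
set_option maxHeartbeats 4000000

private lemma det6_s12 {R : Type*} [CommRing R]
    (a00 a01 a02 a03 b11 b14 c22 c25 d30 d33 e41 e44 f52 f55 : R) :
    (!![a00, a01, a02, a03, 0, 0;
        0, b11, 0, 0, b14, 0;
        0, 0, c22, 0, 0, c25;
        d30, 0, 0, d33, 0, 0;
        0, e41, 0, 0, e44, 0;
        0, 0, f52, 0, 0, f55] : Matrix (Fin 6) (Fin 6) R).det
    = (a00 * d33 - a03 * d30) * (b11 * e44 - b14 * e41) * (c22 * f55 - c25 * f52) := by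
  have e1 : (![(0:R), b11, 0, 0, b14, 0]) 5 = 0 := rfl
  have e2 : ∀ h : ((3 : Fin 4) : ℕ) < 5, (![(0:R), f52, 0, 0, f55]) ⟨((3 : Fin 4) : ℕ), h⟩ = 0 :=
    fun _ => rfl
  simp (config := { decide := true }) [Matrix.det_succ_row_zero, Fin.sum_univ_succ, Fin.succAbove,
    Fin.castSucc, Fin.castAdd, Fin.castLE, Fin.succ, e1, e2]
  ring

private lemma quad_factor (s t d u w : ℝ) (hd : d = s ^ 2 - 4 * t) (hd0 : 0 ≤ d)
    (hu : u = (-s + Real.sqrt d) / 2) (hw : w = (-s - Real.sqrt d) / 2) :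
    (X ^ 2 + C s * X + C t : ℝ[X]) = (X - C u) * (X - C w) := by
  have h1 : Real.sqrt d ^ 2 = d := Real.sq_sqrt hd0
  have hab : u + w = -s := by rw [hu, hw]; ring
  have hm : u * w = t := by
    have h2 : u * w = (s ^ 2 - Real.sqrt d ^ 2) / 4 := by rw [hu, hw]; ring
    rw [h2, h1, hd]; ring
  have h3 : (X - C u) * (X - C w) = X ^ 2 - C (u + w) * X + C (u * w) := by
    simp only [C_add, C_mul]; ring
  rw [h3, hab, hm, map_neg]; ring

private lemma negroots (s d u w : ℝ) (hs : 0 < s) (hd0 : 0 ≤ d)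
    (hu : u = (-s + Real.sqrt d) / 2) (hw : w = (-s - Real.sqrt d) / 2) :
    (u < 0 ∧ w < 0) ↔ d < s ^ 2 := by
  have hn := Real.sqrt_nonneg d
  constructor
  · rintro ⟨h1, _⟩
    have h2 : Real.sqrt d < s := by rw [hu] at h1; linarith
    calc d = Real.sqrt d ^ 2 := (Real.sq_sqrt hd0).symm
    _ < s ^ 2 := by nlinarith
  · intro h
    have h2 : Real.sqrt d < s := (Real.sqrt_lt' hs).mpr h
    constructor
    · rw [hu]; linarith
    · rw [hw]; linarith

private lemma cons_val_3 {α : Type*} (a : α) (u : Fin 3 → α) : Matrix.vecCons a u 3 = u 2 := rfl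
private lemma cons_val_4 {α : Type*} (a : α) (u : Fin 4 → α) : Matrix.vecCons a u 4 = u 3 := rfl
private lemma cons_val_5 {α : Type*} (a : α) (u : Fin 5 → α) : Matrix.vecCons a u 5 = u 4 := rfl


/-- with the mutation parameters p₂ = q₃ = 0, R₁ > 1, and
X₁ = (1 − 1/R₁, 0, 0, δ₁(R₁−1)/α₁, 0, 0), the six eigenvalues of J(X₁) are the six
listed real numbers, and all six of them are negative iff R₁ > R₂ and R₁ > R₃. -/
theorem stmt_12 (α₁ α₂ α₃ δ₁ δ₂ δ₃ c p₁ q₂ r₃ : ℝ)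
    (hα₁ : 0 < α₁) (hα₂ : 0 < α₂) (hα₃ : 0 < α₃)
    (hδ₁ : 0 < δ₁) (hδ₂ : 0 < δ₂) (hδ₃ : 0 < δ₃) (hc : 0 < c)
    (hp₁ : 0 < p₁) (hq₂ : 0 < q₂) (hr₃ : 0 < r₃)
    (hR₁ : 1 < α₁ * p₁ / (c * δ₁)) :
    let R₁ : ℝ := α₁ * p₁ / (c * δ₁)
    let R₂ : ℝ := α₂ * q₂ / (c * δ₂)
    let R₃ : ℝ := α₃ * r₃ / (c * δ₃)
    let v₁ : ℝ := δ₁ * (R₁ - 1) / α₁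
    let M := Jhbv α₁ α₂ α₃ δ₁ δ₂ δ₃ c p₁ 0 q₂ 0 r₃ ![1 - 1 / R₁, 0, 0, v₁, 0, 0]
    let evs : Multiset ℝ :=
      {(-(α₁ * v₁) - δ₁ - c + Real.sqrt ((α₁ * v₁ + δ₁ - c) ^ 2 + 4 * α₁ * p₁ / R₁)) / 2,
       (-(α₁ * v₁) - δ₁ - c - Real.sqrt ((α₁ * v₁ + δ₁ - c) ^ 2 + 4 * α₁ * p₁ / R₁)) / 2,
       (-c - δ₂ + Real.sqrt ((δ₂ - c) ^ 2 + 4 * α₂ * q₂ / R₁)) / 2,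
       (-c - δ₂ - Real.sqrt ((δ₂ - c) ^ 2 + 4 * α₂ * q₂ / R₁)) / 2,
       (-c - δ₃ + Real.sqrt ((δ₃ - c) ^ 2 + 4 * α₃ * r₃ / R₁)) / 2,
       (-c - δ₃ - Real.sqrt ((δ₃ - c) ^ 2 + 4 * α₃ * r₃ / R₁)) / 2}
    M.charpoly.roots = evs ∧
      ((∀ μ ∈ evs, μ < 0) ↔ R₂ < R₁ ∧ R₃ < R₁) := by
  intro R₁ R₂ R₃ v₁ M evs
  have hR₁pos : (0:ℝ) < R₁ := lt_trans one_pos hR₁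
  have hα₁ne : α₁ ≠ 0 := ne_of_gt hα₁
  have hR₁ne : R₁ ≠ 0 := ne_of_gt hR₁pos
  have hav : α₁ * v₁ = δ₁ * (R₁ - 1) := by
    show α₁ * (δ₁ * (R₁ - 1) / α₁) = δ₁ * (R₁ - 1)
    field_simp
  have hap : α₁ * p₁ = R₁ * (c * δ₁) := by
    show α₁ * p₁ = α₁ * p₁ / (c * δ₁) * (c * δ₁)
    field_simp
  have haq : α₂ * q₂ = R₂ * (c * δ₂) := by
    show α₂ * q₂ = α₂ * q₂ / (c * δ₂) * (c * δ₂)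
    field_simp
  have har : α₃ * r₃ = R₃ * (c * δ₃) := by
    show α₃ * r₃ = α₃ * r₃ / (c * δ₃) * (c * δ₃)
    field_simp
  -- discriminants nonneg
  have hq1 : (0:ℝ) < 4 * α₁ * p₁ / R₁ := by
    apply div_pos _ hR₁pos; positivity
  have hq2 : (0:ℝ) < 4 * α₂ * q₂ / R₁ := by
    apply div_pos _ hR₁pos; positivity
  have hq3 : (0:ℝ) < 4 * α₃ * r₃ / R₁ := by
    apply div_pos _ hR₁pos; positivity
  have hd10 : (0:ℝ) ≤ (α₁ * v₁ + δ₁ - c) ^ 2 + 4 * α₁ * p₁ / R₁ := by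
    nlinarith [sq_nonneg (α₁ * v₁ + δ₁ - c)]
  have hd20 : (0:ℝ) ≤ (δ₂ - c) ^ 2 + 4 * α₂ * q₂ / R₁ := by
    nlinarith [sq_nonneg (δ₂ - c)]
  have hd30 : (0:ℝ) ≤ (δ₃ - c) ^ 2 + 4 * α₃ * r₃ / R₁ := by
    nlinarith [sq_nonneg (δ₃ - c)]
  have hs1 : (0:ℝ) < α₁ * v₁ + δ₁ + c := by nlinarith
  -- charmatrix
  have hx : (1:ℝ) - (1 - 1 / R₁) - 0 - 0 = 1 / R₁ := by ring
  have hM : charmatrix M =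
      !![X + C (α₁ * v₁ + δ₁), C (α₁ * v₁), C (α₁ * v₁), -C (α₁ * (1 / R₁)), 0, 0;
         0, X + C δ₂, 0, 0, -C (α₂ * (1 / R₁)), 0;
         0, 0, X + C δ₃, 0, 0, -C (α₃ * (1 / R₁));
         -C p₁, 0, 0, X + C c, 0, 0;
         0, -C q₂, 0, 0, X + C c, 0;
         0, 0, -C r₃, 0, 0, X + C c] := by
    have hx0 : (![1 - 1 / R₁, 0, 0, v₁, 0, 0] : Fin 6 → ℝ) 0 = 1 - 1 / R₁ := rfl
    have hx1 : (![1 - 1 / R₁, 0, 0, v₁, 0, 0] : Fin 6 → ℝ) 1 = 0 := rfl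
    have hx2 : (![1 - 1 / R₁, 0, 0, v₁, 0, 0] : Fin 6 → ℝ) 2 = 0 := rfl
    have hx3 : (![1 - 1 / R₁, 0, 0, v₁, 0, 0] : Fin 6 → ℝ) 3 = v₁ := rfl
    have hx4 : (![1 - 1 / R₁, 0, 0, v₁, 0, 0] : Fin 6 → ℝ) 4 = 0 := rfl
    have hx5 : (![1 - 1 / R₁, 0, 0, v₁, 0, 0] : Fin 6 → ℝ) 5 = 0 := rfl
    show charmatrix (Jhbv α₁ α₂ α₃ δ₁ δ₂ δ₃ c p₁ 0 q₂ 0 r₃ ![1 - 1 / R₁, 0, 0, v₁, 0, 0]) = _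
    refine Matrix.ext fun i j => ?_
    fin_cases i <;> fin_cases j <;>
      simp (config := { decide := true }) [charmatrix_apply_eq, charmatrix_apply_ne, Jhbv,
        hx0, hx1, hx2, hx3, hx4, hx5, hx, cons_val_3, cons_val_4, cons_val_5, Matrix.vecHead,
        Matrix.vecTail, Function.comp] <;> ring
  have hcp : M.charpoly =
      ((X + C (α₁ * v₁ + δ₁)) * (X + C c) - (-C (α₁ * (1 / R₁))) * (-C p₁)) *
      ((X + C δ₂) * (X + C c) - (-C (α₂ * (1 / R₁))) * (-C q₂)) *
      ((X + C δ₃) * (X + C c) - (-C (α₃ * (1 / R₁))) * (-C r₃)) := by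
    show (charmatrix M).det = _
    rw [hM, det6_s12]
  have f1 : (X + C (α₁ * v₁ + δ₁)) * (X + C c) - (-C (α₁ * (1 / R₁))) * (-C p₁)
      = (X:ℝ[X]) ^ 2 + C (α₁ * v₁ + δ₁ + c) * X + C ((α₁ * v₁ + δ₁) * c - α₁ * (1 / R₁) * p₁) := by
    simp only [C_add, C_mul, C_sub]; ring
  have f2 : (X + C δ₂) * (X + C c) - (-C (α₂ * (1 / R₁))) * (-C q₂)
      = (X:ℝ[X]) ^ 2 + C (δ₂ + c) * X + C (δ₂ * c - α₂ * (1 / R₁) * q₂) := by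
    simp only [C_add, C_mul, C_sub]; ring
  have f3 : (X + C δ₃) * (X + C c) - (-C (α₃ * (1 / R₁))) * (-C r₃)
      = (X:ℝ[X]) ^ 2 + C (δ₃ + c) * X + C (δ₃ * c - α₃ * (1 / R₁) * r₃) := by
    simp only [C_add, C_mul, C_sub]; ring
  have g1 := quad_factor (α₁ * v₁ + δ₁ + c) ((α₁ * v₁ + δ₁) * c - α₁ * (1 / R₁) * p₁)
      ((α₁ * v₁ + δ₁ - c) ^ 2 + 4 * α₁ * p₁ / R₁)
      ((-(α₁ * v₁) - δ₁ - c + Real.sqrt ((α₁ * v₁ + δ₁ - c) ^ 2 + 4 * α₁ * p₁ / R₁)) / 2)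
      ((-(α₁ * v₁) - δ₁ - c - Real.sqrt ((α₁ * v₁ + δ₁ - c) ^ 2 + 4 * α₁ * p₁ / R₁)) / 2)
      (by ring) hd10 (by ring) (by ring)
  have g2 := quad_factor (δ₂ + c) (δ₂ * c - α₂ * (1 / R₁) * q₂)
      ((δ₂ - c) ^ 2 + 4 * α₂ * q₂ / R₁)
      ((-c - δ₂ + Real.sqrt ((δ₂ - c) ^ 2 + 4 * α₂ * q₂ / R₁)) / 2)
      ((-c - δ₂ - Real.sqrt ((δ₂ - c) ^ 2 + 4 * α₂ * q₂ / R₁)) / 2)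
      (by ring) hd20 (by ring) (by ring)
  have g3 := quad_factor (δ₃ + c) (δ₃ * c - α₃ * (1 / R₁) * r₃)
      ((δ₃ - c) ^ 2 + 4 * α₃ * r₃ / R₁)
      ((-c - δ₃ + Real.sqrt ((δ₃ - c) ^ 2 + 4 * α₃ * r₃ / R₁)) / 2)
      ((-c - δ₃ - Real.sqrt ((δ₃ - c) ^ 2 + 4 * α₃ * r₃ / R₁)) / 2)
      (by ring) hd30 (by ring) (by ring)
  have hprod : M.charpoly = (Multiset.map (fun a => X - C a) evs).prod := by
    show M.charpoly = (Multiset.map (fun a => X - C a)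
      ({(-(α₁ * v₁) - δ₁ - c + Real.sqrt ((α₁ * v₁ + δ₁ - c) ^ 2 + 4 * α₁ * p₁ / R₁)) / 2,
       (-(α₁ * v₁) - δ₁ - c - Real.sqrt ((α₁ * v₁ + δ₁ - c) ^ 2 + 4 * α₁ * p₁ / R₁)) / 2,
       (-c - δ₂ + Real.sqrt ((δ₂ - c) ^ 2 + 4 * α₂ * q₂ / R₁)) / 2,
       (-c - δ₂ - Real.sqrt ((δ₂ - c) ^ 2 + 4 * α₂ * q₂ / R₁)) / 2,
       (-c - δ₃ + Real.sqrt ((δ₃ - c) ^ 2 + 4 * α₃ * r₃ / R₁)) / 2,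
       (-c - δ₃ - Real.sqrt ((δ₃ - c) ^ 2 + 4 * α₃ * r₃ / R₁)) / 2} : Multiset ℝ)).prod
    rw [hcp, f1, f2, f3, g1, g2, g3]
    simp only [Multiset.insert_eq_cons, Multiset.map_cons, Multiset.map_singleton,
      Multiset.prod_cons, Multiset.prod_singleton]
    ring
  constructor
  · rw [hprod, Polynomial.roots_multiset_prod_X_sub_C]
  · -- negativity
    have i1 := negroots (α₁ * v₁ + δ₁ + c) ((α₁ * v₁ + δ₁ - c) ^ 2 + 4 * α₁ * p₁ / R₁)
      ((-(α₁ * v₁) - δ₁ - c + Real.sqrt ((α₁ * v₁ + δ₁ - c) ^ 2 + 4 * α₁ * p₁ / R₁)) / 2)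
      ((-(α₁ * v₁) - δ₁ - c - Real.sqrt ((α₁ * v₁ + δ₁ - c) ^ 2 + 4 * α₁ * p₁ / R₁)) / 2)
      hs1 hd10 (by ring) (by ring)
    have i2 := negroots (δ₂ + c) ((δ₂ - c) ^ 2 + 4 * α₂ * q₂ / R₁)
      ((-c - δ₂ + Real.sqrt ((δ₂ - c) ^ 2 + 4 * α₂ * q₂ / R₁)) / 2)
      ((-c - δ₂ - Real.sqrt ((δ₂ - c) ^ 2 + 4 * α₂ * q₂ / R₁)) / 2)
      (by linarith) hd20 (by ring) (by ring)
    have i3 := negroots (δ₃ + c) ((δ₃ - c) ^ 2 + 4 * α₃ * r₃ / R₁)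
      ((-c - δ₃ + Real.sqrt ((δ₃ - c) ^ 2 + 4 * α₃ * r₃ / R₁)) / 2)
      ((-c - δ₃ - Real.sqrt ((δ₃ - c) ^ 2 + 4 * α₃ * r₃ / R₁)) / 2)
      (by linarith) hd30 (by ring) (by ring)
    have j1 : (α₁ * v₁ + δ₁ - c) ^ 2 + 4 * α₁ * p₁ / R₁ < (α₁ * v₁ + δ₁ + c) ^ 2 := by
      have h4 : 4 * α₁ * p₁ / R₁ = 4 * (c * δ₁) := by
        rw [show 4 * α₁ * p₁ = 4 * (α₁ * p₁) from by ring, hap]; field_simp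
      rw [h4]
      nlinarith [mul_pos hc hδ₁]
    have j2 : (δ₂ - c) ^ 2 + 4 * α₂ * q₂ / R₁ < (δ₂ + c) ^ 2 ↔ R₂ < R₁ := by
      have h4 : 4 * α₂ * q₂ / R₁ = 4 * R₂ * (c * δ₂) / R₁ := by
        rw [show 4 * α₂ * q₂ = 4 * (α₂ * q₂) from by ring, haq]; ring
      rw [h4]
      constructor
      · intro h
        have h' : 4 * R₂ * (c * δ₂) / R₁ < 4 * (c * δ₂) := by nlinarith
        rw [div_lt_iff₀ hR₁pos] at h'
        nlinarith [mul_pos hc hδ₂]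
      · intro h
        have h' : 4 * R₂ * (c * δ₂) < 4 * (c * δ₂) * R₁ := by nlinarith [mul_pos hc hδ₂]
        have h'' : 4 * R₂ * (c * δ₂) / R₁ < 4 * (c * δ₂) := (div_lt_iff₀ hR₁pos).mpr h'
        nlinarith
    have j3 : (δ₃ - c) ^ 2 + 4 * α₃ * r₃ / R₁ < (δ₃ + c) ^ 2 ↔ R₃ < R₁ := by
      have h4 : 4 * α₃ * r₃ / R₁ = 4 * R₃ * (c * δ₃) / R₁ := by
        rw [show 4 * α₃ * r₃ = 4 * (α₃ * r₃) from by ring, har]; ring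
      rw [h4]
      constructor
      · intro h
        have h' : 4 * R₃ * (c * δ₃) / R₁ < 4 * (c * δ₃) := by nlinarith
        rw [div_lt_iff₀ hR₁pos] at h'
        nlinarith [mul_pos hc hδ₃]
      · intro h
        have h' : 4 * R₃ * (c * δ₃) < 4 * (c * δ₃) * R₁ := by nlinarith [mul_pos hc hδ₃]
        have h'' : 4 * R₃ * (c * δ₃) / R₁ < 4 * (c * δ₃) := (div_lt_iff₀ hR₁pos).mpr h'
        nlinarith
    show (∀ μ ∈ ({(-(α₁ * v₁) - δ₁ - c + Real.sqrt ((α₁ * v₁ + δ₁ - c) ^ 2 + 4 * α₁ * p₁ / R₁)) / 2,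
       (-(α₁ * v₁) - δ₁ - c - Real.sqrt ((α₁ * v₁ + δ₁ - c) ^ 2 + 4 * α₁ * p₁ / R₁)) / 2,
       (-c - δ₂ + Real.sqrt ((δ₂ - c) ^ 2 + 4 * α₂ * q₂ / R₁)) / 2,
       (-c - δ₂ - Real.sqrt ((δ₂ - c) ^ 2 + 4 * α₂ * q₂ / R₁)) / 2,
       (-c - δ₃ + Real.sqrt ((δ₃ - c) ^ 2 + 4 * α₃ * r₃ / R₁)) / 2,
       (-c - δ₃ - Real.sqrt ((δ₃ - c) ^ 2 + 4 * α₃ * r₃ / R₁)) / 2} : Multiset ℝ), μ < 0)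
       ↔ R₂ < R₁ ∧ R₃ < R₁
    simp only [Multiset.insert_eq_cons, Multiset.mem_cons, Multiset.mem_singleton,
      forall_eq_or_imp, forall_eq]
    constructor
    · rintro ⟨h1, h2, h3, h4, h5, h6⟩
      exact ⟨j2.mp (i2.mp ⟨h3, h4⟩), j3.mp (i3.mp ⟨h5, h6⟩)⟩
    · rintro ⟨hh2, hh3⟩
      obtain ⟨k1, k2⟩ := i1.mpr j1
      obtain ⟨k3, k4⟩ := i2.mpr (j2.mpr hh2)
      obtain ⟨k5, k6⟩ := i3.mpr (j3.mpr hh3)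
      exact ⟨k1, k2, k3, k4, k5, k6⟩
end
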